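/- arXiv:1206.6607 — 2 statements merged into one kernel-verified Lean document; each statement's English description precedes it below -/
import Mathlib

section
/- Let X be an indecomposable quandle and X' = {t} a singleton subrack with #X ≥ 3. Then there exist r, s ∈ X \ {t} with r ▷ s = t; consequently g_t = g_r g_s g_r^{-1} in Inn X and X \ {t} generates Inn X. -/
/-- For an indecomposable quandle `X` with at least 3 elements (encoded by
`g : X → Equiv.Perm X`, `g t s = t ▷ s`) and `t ∈ X`, there exist
`r, s ∈ X \ {t}` with `r ▷ s = t`; consequently `g t = g r * g s * (g r)⁻¹`
and `X \ {t}` generates the inner group. -/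
theorem singleton_complement_generates_inner_group {X : Type*}
    (hcard : 3 ≤ Nat.card X)
    (g : X → Equiv.Perm X)
    (hdist : ∀ t s r : X, g t (g s r) = g (g t s) (g t r))
    (hidem : ∀ t : X, g t t = t)
    (htrans : ∀ x y : X, ∃ h ∈ Subgroup.closure (Set.range g), h x = y)
    (t : X) :
    ∃ r s : X, r ≠ t ∧ s ≠ t ∧ g r s = t ∧
      g t = g r * g s * (g r)⁻¹ ∧
      Subgroup.closure (g '' {x : X | x ≠ t}) = Subgroup.closure (Set.range g) := by
  -- conjugation formula: g (g a b) = g a * g b * (g a)⁻¹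
  have hconj : ∀ a b : X, g (g a b) = g a * g b * (g a)⁻¹ := by
    intro a b
    ext x
    have := hdist a b ((g a)⁻¹ x)
    simpa [Equiv.Perm.mul_apply] using this.symm
  -- find r ≠ t with g r t ≠ t
  have hnt : Nontrivial X := by
    have h1 : 1 < Nat.card X := by omega
    have hf : Finite X := Nat.finite_of_card_ne_zero (by omega)
    exact Finite.one_lt_card_iff_nontrivial.mp (by simpa [Nat.card_eq_fintype_card] using h1)
  have hr : ∃ r : X, r ≠ t ∧ g r t ≠ t := by
    by_contra hcon
    push_neg at hcon
    have hfix : ∀ h ∈ Subgroup.closure (Set.range g), h t = t := by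
      intro h hh
      induction hh using Subgroup.closure_induction with
      | mem x hx =>
        obtain ⟨a, rfl⟩ := hx
        by_cases ha : a = t
        · simpa [ha] using hidem t
        · exact hcon a ha
      | one => rfl
      | mul x y _ _ hx hy => simp [Equiv.Perm.mul_apply, hy, hx]
      | inv x _ hx =>
        have := congrArg (x⁻¹ : Equiv.Perm X) hx
        simpa using this.symm
    obtain ⟨y, hy⟩ := exists_ne t
    obtain ⟨h, hh, hht⟩ := htrans t y
    exact hy (hht ▸ (hfix h hh).symm ▸ rfl)
  obtain ⟨r, hrt, hgrt⟩ := hr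
  refine ⟨r, (g r)⁻¹ t, hrt, ?_, by simp, ?_, ?_⟩
  · intro hst
    apply hgrt
    have := congrArg (g r) hst
    simpa using this.symm
  · have := hconj r ((g r)⁻¹ t)
    simpa using this
  · apply le_antisymm
    · exact Subgroup.closure_mono (by rintro _ ⟨x, _, rfl⟩; exact ⟨x, rfl⟩)
    · rw [Subgroup.closure_le]
      rintro _ ⟨x, rfl⟩
      by_cases hx : x = t
      · rw [hx]
        have heq : g t = g r * g ((g r)⁻¹ t) * (g r)⁻¹ := by
          have := hconj r ((g r)⁻¹ t); simpa using this
        rw [heq]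
        have hs : ((g r)⁻¹ t : X) ≠ t := by
          intro hst; apply hgrt
          have := congrArg (g r) hst; simpa using this.symm
        have h1 : g r ∈ Subgroup.closure (g '' {x : X | x ≠ t}) :=
          Subgroup.subset_closure ⟨r, hrt, rfl⟩
        have h2 : g ((g r)⁻¹ t) ∈ Subgroup.closure (g '' {x : X | x ≠ t}) :=
          Subgroup.subset_closure ⟨_, hs, rfl⟩
        exact mul_mem (mul_mem h1 h2) (inv_mem h1)
      · exact Subgroup.subset_closure ⟨x, hx, rfl⟩
end

section
/- Let B be an N₀-graded vector space with a linear map φ such that φ maps B(j) into B(j+1) ⊕ B(j−m+1) for all j (interpreting B(negative) = 0), and such that φ is bijective. Then for each residue class [j]_m ∈ Z/mZ, φ restricts to a linear isomorphism from B([j]_m) := ⊕_{i ≡ j mod m} B(i) onto B([j+1]_m); consequently dim B([j]_m) = dim B / m for all classes when B is finite-dimensional, i.e. B is C_m-balanced. -/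
open Module
open scoped DirectSum

/-- Elements of a bounded supremum of graded pieces have components supported there. -/
lemma decompose_eq_zero_of_mem_biSup {F M : Type*} [Semiring F] [AddCommMonoid M]
    [Module F M] (B : ℕ → Submodule F M) [DirectSum.Decomposition B]
    (s : Set ℕ) {x : M} (hx : x ∈ ⨆ n ∈ s, B n) {n : ℕ} (hn : n ∉ s) :
    DirectSum.decompose B x n = 0 := by
  classical
  set p : Submodule F M := ⨅ n ∈ sᶜ,
    LinearMap.ker ((DirectSum.component F ℕ (fun n => ↥(B n)) n).comp
      (DirectSum.decomposeLinearEquiv B).toLinearMap) with hp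
  have hle : (⨆ n ∈ s, B n) ≤ p := by
    refine iSup₂_le fun k hk => ?_
    intro y hy
    simp only [hp, Submodule.mem_iInf, LinearMap.mem_ker, LinearMap.coe_comp,
      Function.comp_apply, DirectSum.decomposeLinearEquiv_apply, Set.mem_compl_iff]
    intro j hj
    have hkj : k ≠ j := fun h => hj (h ▸ hk)
    have := DirectSum.decompose_of_mem_ne B hy hkj
    simpa [DirectSum.component] using Subtype.ext this
  have hxp := hle hx
  simp only [hp, Submodule.mem_iInf, LinearMap.mem_ker, LinearMap.coe_comp,
    Function.comp_apply, DirectSum.decomposeLinearEquiv_apply, Set.mem_compl_iff] at hxp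
  exact hxp n hn

/-- Suprema of graded pieces over disjoint index sets are disjoint. -/
lemma disjoint_biSup_biSup {F M : Type*} [Semiring F] [AddCommMonoid M]
    [Module F M] (B : ℕ → Submodule F M) [DirectSum.Decomposition B]
    {s t : Set ℕ} (hst : Disjoint s t) :
    Disjoint (⨆ n ∈ s, B n) (⨆ n ∈ t, B n) := by
  classical
  rw [Submodule.disjoint_def]
  intro x h1 h2
  rw [← DirectSum.sum_support_decompose B x]
  refine Finset.sum_eq_zero fun n _ => ?_
  by_cases hn : n ∈ s
  · have hnt : n ∉ t := fun ht => (hst.le_bot ⟨hn, ht⟩ : n ∈ (⊥ : Set ℕ)).elim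
    rw [decompose_eq_zero_of_mem_biSup B t h2 hnt, ZeroMemClass.coe_zero]
  · rw [decompose_eq_zero_of_mem_biSup B s h1 hn, ZeroMemClass.coe_zero]

set_option maxHeartbeats 1000000 in
/-- `C_m`-balanced lemma: if the bijective linear map `φ` sends each graded
component `B(j)` into `B(j+1) ⊕ B(j-m+1)` (with `B` of negative degree being
zero), then `φ` restricts to an isomorphism `B([j]_m) ≅ B([j+1]_m)` of the
mod-`m` components, and each mod-`m` component has dimension `dim B / m`. -/
theorem quotient_grading_balanced {F M : Type*} [Field F] [AddCommGroup M]
    [Module F M] [FiniteDimensional F M]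
    (B : ℕ → Submodule F M) [DirectSum.Decomposition B]
    (m : ℕ) (hm : 0 < m) (φ : M ≃ₗ[F] M)
    (hφ : ∀ j : ℕ, ∀ x ∈ B j, φ x ∈
      B (j + 1) ⊔ (if m ≤ j + 1 then B (j + 1 - m) else ⊥)) :
    (∀ l : ℕ,
      Submodule.map φ.toLinearMap (⨆ j : ℕ, ⨆ _ : j % m = l % m, B j)
        = ⨆ j : ℕ, ⨆ _ : j % m = (l + 1) % m, B j) ∧
    (∀ l : ℕ,
      m * finrank F ↥(⨆ j : ℕ, ⨆ _ : j % m = l % m, B j) = finrank F M) := by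
  classical
  set C : ℕ → Submodule F M := fun l => ⨆ j : ℕ, ⨆ _ : j % m = l % m, B j with hC
  -- B n is contained in C l whenever n ≡ l [MOD m]
  have hBle : ∀ n l : ℕ, n % m = l % m → B n ≤ C l := by
    intro n l h
    exact le_iSup₂ (f := fun j (_ : j % m = l % m) => B j) n h
  -- C only depends on the residue
  have hCmod : ∀ l : ℕ, C l = C (l % m) := by
    intro l
    simp only [hC, Nat.mod_mod_of_dvd _ (dvd_refl m)]
  have hCper : ∀ l : ℕ, C (l + m) = C l := by
    intro l
    simp only [hC, Nat.add_mod_right]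
  -- φ maps C l into C (l+1)
  have hmap_le : ∀ l : ℕ, Submodule.map φ.toLinearMap (C l) ≤ C (l + 1) := by
    intro l
    rw [hC]
    simp only [Submodule.map_iSup]
    refine iSup₂_le fun j hj => ?_
    rintro _ ⟨x, hx, rfl⟩
    have h1 : B (j + 1) ≤ C (l + 1) := by
      exact hBle _ _ (by rw [Nat.add_mod j 1 m, hj, ← Nat.add_mod])
    have h2 : (if m ≤ j + 1 then B (j + 1 - m) else ⊥) ≤ C (l + 1) := by
      split_ifs with h
      · refine hBle _ _ ?_
        have : j + 1 - m + m = j + 1 := by omega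
        calc (j + 1 - m) % m = (j + 1 - m + m) % m := (Nat.add_mod_right _ _).symm
          _ = (j + 1) % m := by rw [this]
          _ = (l + 1) % m := by rw [Nat.add_mod j 1 m, hj, ← Nat.add_mod]
      · exact bot_le
    exact sup_le h1 h2 (hφ j x hx)
  -- finranks
  set f : ℕ → ℕ := fun l => finrank F ↥(C l) with hf
  have hmono : ∀ l : ℕ, f l ≤ f (l + 1) := by
    intro l
    have := Submodule.finrank_mono (hmap_le l)
    rwa [LinearEquiv.finrank_map_eq φ (C l)] at this
  have hchain : ∀ l k : ℕ, f l ≤ f (l + k) := by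
    intro l k
    induction k with
    | zero => exact le_rfl
    | succ n ih => exact ih.trans (by rw [← Nat.add_assoc]; exact hmono (l + n))
  have hstep : ∀ l : ℕ, f l = f (l + 1) := by
    intro l
    refine le_antisymm (hmono l) ?_
    have h1 : f (l + 1) ≤ f (l + 1 + (m - 1)) := hchain (l + 1) (m - 1)
    have h2 : l + 1 + (m - 1) = l + m := by omega
    rw [h2] at h1
    have h3 : f (l + m) = f l := congrArg (fun p : Submodule F M => finrank F ↥p) (hCper l)
    rw [h3] at h1
    exact h1
  have hconst : ∀ l : ℕ, f l = f 0 := by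
    intro l
    induction l with
    | zero => rfl
    | succ n ih => rw [← hstep n, ih]
  -- part 1
  have part1 : ∀ l : ℕ, Submodule.map φ.toLinearMap (C l) = C (l + 1) := by
    intro l
    refine Submodule.eq_of_le_of_finrank_le (hmap_le l) ?_
    rw [LinearEquiv.finrank_map_eq φ (C l)]
    exact le_of_eq (((hconst (l + 1)).trans (hconst l).symm : f (l + 1) = f l))
  -- part 2: internal direct sum over Fin m
  set D : Fin m → Submodule F M := fun i => C i.val with hD
  have hintern := DirectSum.Decomposition.isInternal B
  have hBindep := hintern.submodule_iSupIndep
  have hBtop := hintern.submodule_iSup_eq_top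
  have hCset : ∀ l : ℕ, C l = ⨆ n ∈ {n : ℕ | n % m = l % m}, B n := fun l => rfl
  have hindep : iSupIndep D := by
    intro i
    have hle2 : (⨆ (j : Fin m) (_ : j ≠ i), D j) ≤ ⨆ n ∈ {n : ℕ | n % m ≠ i.val % m}, B n := by
      refine iSup₂_le fun j hj => ?_
      show C j.val ≤ _
      refine iSup₂_le fun n hn => ?_
      refine le_iSup₂ (f := fun n (_ : n ∈ {n : ℕ | n % m ≠ i.val % m}) => B n) n ?_
      have hji : (j : ℕ) % m ≠ (i : ℕ) % m := by
        simp only [Nat.mod_eq_of_lt j.isLt, Nat.mod_eq_of_lt i.isLt]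
        exact fun h => hj (Fin.ext h)
      exact fun h => hji (hn ▸ h)
    refine Disjoint.mono_right hle2 ?_
    show Disjoint (⨆ n ∈ {n : ℕ | n % m = i.val % m}, B n) (⨆ n ∈ {n : ℕ | n % m ≠ i.val % m}, B n)
    exact disjoint_biSup_biSup B (by
      intro s hs1 hs2 n hn
      have h1 := hs1 hn
      have h2 := hs2 hn
      exact absurd h1 h2)
  have htop : (⨆ i : Fin m, D i) = ⊤ := by
    refine le_antisymm le_top ?_
    rw [← hBtop]
    refine iSup_le fun n => ?_
    have h1 : B n ≤ C (n % m) := hBle n (n % m) (Nat.mod_mod_of_dvd n (dvd_refl m)).symm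
    exact le_trans h1 (le_iSup D ⟨n % m, Nat.mod_lt n hm⟩)
  have hInternalD : DirectSum.IsInternal D :=
    DirectSum.isInternal_submodule_of_iSupIndep_of_iSup_eq_top hindep htop
  have e : (⨁ i : Fin m, ↥(D i)) ≃ₗ[F] M :=
    LinearEquiv.ofBijective (DirectSum.coeLinearMap D) hInternalD
  have hfinM : finrank F M = ∑ i : Fin m, finrank F ↥(D i) := by
    rw [← e.finrank_eq, finrank_directSum]
  refine ⟨part1, fun l => ?_⟩
  have hDf : ∀ i : Fin m, finrank F ↥(D i) = f l := fun i => (hconst i.val).trans (hconst l).symm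
  have hsum : (∑ i : Fin m, finrank F ↥(D i)) = m * f l := by
    rw [Finset.sum_congr rfl fun i _ => hDf i]
    simp [Nat.mul_comm]
  exact (hfinM.trans hsum).symm
end
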